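/- arXiv:1906.01859 — 2 statements merged into one kernel-verified Lean document; each statement's English description precedes it below -/
import Mathlib

section
/- For every standard normal random variable Z and every t ≥ 0, (1/√(2π)) · (1/(t+1)) · e^{-t²/2} ≤ Pr[Z ≥ t] ≤ (1/√π) · (1/(t+1)) · e^{-t²/2}. -/
open Real MeasureTheory ProbabilityTheory Filter Set

lemma aux_deriv (x : ℝ) (hx : (0:ℝ) ≤ x) :
    HasDerivAt (fun y : ℝ => -(Real.exp (-y ^ 2 / 2) * (y + 1)⁻¹))
      (Real.exp (-x ^ 2 / 2) * ((x ^ 2 + x + 1) / (x + 1) ^ 2)) x := by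
  have hx1 : x + 1 ≠ 0 := by positivity
  have h1 : HasDerivAt (fun y : ℝ => Real.exp (-y ^ 2 / 2)) (Real.exp (-x ^ 2 / 2) * (-x)) x := by
    have : HasDerivAt (fun y : ℝ => -y ^ 2 / 2) (-x) x := by
      have := ((hasDerivAt_pow 2 x).neg).div_const 2
      refine this.congr_deriv ?_ ; norm_num ; ring
    refine ((Real.hasDerivAt_exp (-x ^ 2 / 2)).comp x this).congr_deriv ?_ ; ring
  have h2 : HasDerivAt (fun y : ℝ => (y + 1)⁻¹) (-((x + 1) ^ 2)⁻¹) x := by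
    have h3 : HasDerivAt (fun y : ℝ => y + 1) 1 x := (hasDerivAt_id x).add_const 1
    have := h3.inv hx1
    refine this.congr_deriv ?_
    field_simp
  have := (h1.mul h2).neg
  refine this.congr_deriv ?_
  field_simp
  ring

lemma aux_key (t : ℝ) (ht : 0 ≤ t) :
    Real.exp (-t ^ 2 / 2) / (t + 1) ≤ (∫ x in Set.Ioi t, Real.exp (-x ^ 2 / 2)) ∧
    (∫ x in Set.Ioi t, Real.exp (-x ^ 2 / 2)) ≤ Real.sqrt 2 * (Real.exp (-t ^ 2 / 2) / (t + 1)) := by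
  set f' : ℝ → ℝ := fun x => Real.exp (-x ^ 2 / 2) * ((x ^ 2 + x + 1) / (x + 1) ^ 2) with hf'
  have hg_int : IntegrableOn (fun x : ℝ => Real.exp (-x ^ 2 / 2)) (Set.Ioi t) := by
    have : Integrable (fun x : ℝ => Real.exp (-(1/2 : ℝ) * x ^ 2)) := by
      exact integrable_exp_neg_mul_sq (by norm_num)
    refine (this.congr ?_).integrableOn
    filter_upwards with x
    ring_nf
  have hratio : ∀ x : ℝ, 0 ≤ x → (x ^ 2 + x + 1) / (x + 1) ^ 2 ≤ 1 := by
    intro x hx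
    rw [div_le_one (by positivity)]
    nlinarith
  have hratio_pos : ∀ x : ℝ, 0 ≤ x → 0 ≤ (x ^ 2 + x + 1) / (x + 1) ^ 2 := by
    intro x hx; positivity
  have hf'_int : IntegrableOn f' (Set.Ioi t) := by
    refine Integrable.mono hg_int ?_ ?_
    · apply Measurable.aestronglyMeasurable
      rw [hf']
      exact (Real.measurable_exp.comp (by fun_prop)).mul
        ((by fun_prop : Measurable fun x : ℝ => x ^ 2 + x + 1).div (by fun_prop))
    · filter_upwards [ae_restrict_mem measurableSet_Ioi] with x hx
      have hx0 : (0:ℝ) ≤ x := le_trans ht (le_of_lt hx)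
      rw [Real.norm_eq_abs, Real.norm_eq_abs, abs_of_nonneg (by positivity),
        abs_of_nonneg (Real.exp_pos _).le]
      calc Real.exp (-x ^ 2 / 2) * ((x ^ 2 + x + 1) / (x + 1) ^ 2)
          ≤ Real.exp (-x ^ 2 / 2) * 1 := by
            exact mul_le_mul_of_nonneg_left (hratio x hx0) (Real.exp_pos _).le
        _ = Real.exp (-x ^ 2 / 2) := mul_one _
  have htend : Tendsto (fun y : ℝ => -(Real.exp (-y ^ 2 / 2) * (y + 1)⁻¹)) atTop (nhds 0) := by
    have h1 : Tendsto (fun y : ℝ => Real.exp (-y ^ 2 / 2)) atTop (nhds 0) := by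
      apply Real.tendsto_exp_atBot.comp
      apply Filter.Tendsto.atBot_div_const (by norm_num)
      exact tendsto_neg_atBot_iff.mpr (tendsto_pow_atTop (by norm_num))
    have h2 : Tendsto (fun y : ℝ => (y + 1)⁻¹) atTop (nhds 0) := by
      exact Filter.Tendsto.inv_tendsto_atTop (tendsto_atTop_add_const_right _ 1 tendsto_id)
    simpa using (h1.mul h2).neg
  have hint_eq : (∫ x in Set.Ioi t, f' x) = Real.exp (-t ^ 2 / 2) / (t + 1) := by
    rw [integral_Ioi_of_hasDerivAt_of_tendsto'
      (fun x hx => aux_deriv x (le_trans ht hx)) hf'_int htend]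
    field_simp
    ring
  constructor
  · rw [← hint_eq]
    apply setIntegral_mono_on hf'_int hg_int measurableSet_Ioi
    intro x hx
    have hx0 : (0:ℝ) ≤ x := le_trans ht (le_of_lt hx)
    calc f' x ≤ Real.exp (-x ^ 2 / 2) * 1 :=
          mul_le_mul_of_nonneg_left (hratio x hx0) (Real.exp_pos _).le
      _ = _ := mul_one _
  · have : (∫ x in Set.Ioi t, Real.exp (-x ^ 2 / 2)) ≤ ∫ x in Set.Ioi t, Real.sqrt 2 * f' x := by
      apply setIntegral_mono_on hg_int (hf'_int.const_mul _) measurableSet_Ioi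
      intro x hx
      have hx0 : (0:ℝ) ≤ x := le_trans ht (le_of_lt hx)
      have hs2 : Real.sqrt 2 ^ 2 = 2 := Real.sq_sqrt (by norm_num)
      have hs1 : (1:ℝ) ≤ Real.sqrt 2 := by
        nlinarith [Real.sqrt_nonneg 2]
      have hkey : (x + 1) ^ 2 ≤ Real.sqrt 2 * (x ^ 2 + x + 1) := by
        nlinarith [sq_nonneg (2 * (Real.sqrt 2 - 1) * x + (Real.sqrt 2 - 2)), Real.sqrt_nonneg 2]
      rw [hf']
      rw [show Real.sqrt 2 * (Real.exp (-x ^ 2 / 2) * ((x ^ 2 + x + 1) / (x + 1) ^ 2))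
          = Real.exp (-x ^ 2 / 2) * (Real.sqrt 2 * (x ^ 2 + x + 1) / (x + 1) ^ 2) by ring]
      nth_rewrite 1 [show Real.exp (-x ^ 2 / 2) = Real.exp (-x ^ 2 / 2) * 1 from (mul_one _).symm]
      apply mul_le_mul_of_nonneg_left _ (Real.exp_pos _).le
      rw [le_div_iff₀ (by positivity)]
      linarith
    rw [integral_const_mul, hint_eq] at this
    exact this

/-- Szarek-style two-sided bounds on the upper tail of a standard normal random variable:
`(1/√(2π)) · (1/(t+1)) · e^{-t²/2} ≤ Pr[Z ≥ t] ≤ (1/√π) · (1/(t+1)) · e^{-t²/2}` for `t ≥ 0`. -/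
theorem stmt_2 (t : ℝ) (ht : 0 ≤ t) :
    (1 / Real.sqrt (2 * π)) * (1 / (t + 1)) * Real.exp (-t ^ 2 / 2)
        ≤ ((gaussianReal 0 1) (Set.Ici t)).toReal ∧
    ((gaussianReal 0 1) (Set.Ici t)).toReal
        ≤ (1 / Real.sqrt π) * (1 / (t + 1)) * Real.exp (-t ^ 2 / 2) := by
  have h1 : ((gaussianReal 0 1) (Set.Ici t)).toReal
      = (Real.sqrt (2 * π))⁻¹ * ∫ x in Set.Ioi t, Real.exp (-x ^ 2 / 2) := by
    rw [gaussianReal_apply_eq_integral 0 one_ne_zero]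
    rw [ENNReal.toReal_ofReal (setIntegral_nonneg measurableSet_Ici
      (fun x _ => gaussianPDFReal_nonneg 0 1 x))]
    rw [MeasureTheory.integral_Ici_eq_integral_Ioi, ← integral_const_mul]
    apply setIntegral_congr_fun measurableSet_Ioi
    intro x _
    simp [gaussianPDFReal]
  rcases aux_key t ht with ⟨hlo, hhi⟩
  have hπ : (0:ℝ) < Real.sqrt (2 * π) := Real.sqrt_pos.mpr (by positivity)
  constructor
  · rw [h1]
    calc (1 / Real.sqrt (2 * π)) * (1 / (t + 1)) * Real.exp (-t ^ 2 / 2)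
        = (Real.sqrt (2 * π))⁻¹ * (Real.exp (-t ^ 2 / 2) / (t + 1)) := by
          ring
      _ ≤ _ := by
          apply mul_le_mul_of_nonneg_left hlo (by positivity)
  · rw [h1]
    have heq : (Real.sqrt (2 * π))⁻¹ * (Real.sqrt 2 * (Real.exp (-t ^ 2 / 2) / (t + 1)))
        = (1 / Real.sqrt π) * (1 / (t + 1)) * Real.exp (-t ^ 2 / 2) := by
      rw [show (2 * π) = 2 * π from rfl, Real.sqrt_mul (by norm_num) π]
      have h2 : Real.sqrt 2 ≠ 0 := by positivity
      have hp : Real.sqrt π ≠ 0 := by positivity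
      field_simp
    calc (Real.sqrt (2 * π))⁻¹ * ∫ x in Set.Ioi t, Real.exp (-x ^ 2 / 2)
        ≤ (Real.sqrt (2 * π))⁻¹ * (Real.sqrt 2 * (Real.exp (-t ^ 2 / 2) / (t + 1))) :=
          mul_le_mul_of_nonneg_left hhi (by positivity)
      _ = _ := heq
end

section
/- Let n ≥ 1 and let R be a uniformly random element of {r₀, r₀+1, …, n} for some 1 ≤ r₀ ≤ n. Consider a bijection π of {1,…,n} and form π' by swapping the values at positions so that the element previously at rank r₀ now has rank R and vice versa. If π restricted to a set B (with the element of rank r₀ belonging to B) is such that, conditioned on the ranks outside {r₀,…,n}, all placements of the remaining elements of B among ranks {r₀+1,…,n} are equally likely, then after the swap all placements of the elements of B among ranks {r₀,…,n} are equally likely. -/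
open Finset

/-- Rank-shuffle invariant. Before the swap, a distinguished element of `B` has rank `r₀`
and the remaining `k` elements of `B` occupy a uniformly random `k`-subset `T` of the ranks
`{r₀+1,…,n}`. A rank `R` is drawn uniformly from `{r₀,…,n}` and the element at rank `r₀` is
swapped with the element at rank `R`: the resulting set of ranks occupied by `B` is
`{r₀} ∪ T` if `R ∈ {r₀} ∪ T` and `{R} ∪ T` otherwise. Then every placement of the elements
of `B` among the ranks `{r₀,…,n}` is equally likely: each `(k+1)`-subset `A` of `{r₀,…,n}`
occurs with probability `1 / C(n-r₀+1, k+1)`. -/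
theorem stmt_7 (n r₀ k : ℕ) (hr₀ : 1 ≤ r₀) (hrn : r₀ ≤ n)
    (hk : k + 1 ≤ n - r₀ + 1)
    (A : Finset ℕ) (hA : A ∈ (Finset.Icc r₀ n).powersetCard (k + 1)) :
    ((((Finset.Icc (r₀ + 1) n).powersetCard k ×ˢ Finset.Icc r₀ n).filter
        (fun TR => (if TR.2 ∈ insert r₀ TR.1 then insert r₀ TR.1
                    else insert TR.2 TR.1) = A)).card : ℝ) /
      ((((Finset.Icc (r₀ + 1) n).powersetCard k ×ˢ Finset.Icc r₀ n)).card : ℝ)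
      = 1 / ((n - r₀ + 1).choose (k + 1) : ℝ) := by
  rw [Finset.mem_powersetCard] at hA
  obtain ⟨hAsub, hAcard⟩ := hA
  -- numerator
  have hfilter :
      (((Finset.Icc (r₀ + 1) n).powersetCard k ×ˢ Finset.Icc r₀ n).filter
        (fun TR => (if TR.2 ∈ insert r₀ TR.1 then insert r₀ TR.1
                    else insert TR.2 TR.1) = A))
      = A.image (fun R => ((if r₀ ∈ A then A.erase r₀ else A.erase R), R)) := by
    ext ⟨T, R⟩
    simp only [mem_filter, mem_product, mem_powersetCard, mem_image, Prod.mk.injEq]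
    constructor
    · rintro ⟨⟨⟨hTsub, hTcard⟩, hR⟩, hcond⟩
      have hr0T : r₀ ∉ T := fun h => by
        have := hTsub h; rw [mem_Icc] at this; omega
      by_cases hRin : R ∈ insert r₀ T
      · rw [if_pos hRin] at hcond
        have hr0A : r₀ ∈ A := hcond ▸ mem_insert_self _ _
        refine ⟨R, hcond ▸ hRin, ?_, rfl⟩
        rw [if_pos hr0A, ← hcond, erase_insert hr0T]
      · rw [if_neg hRin] at hcond
        have hRne : R ≠ r₀ := fun h => hRin (h ▸ mem_insert_self _ _)
        have hRT : R ∉ T := fun h => hRin (mem_insert_of_mem h)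
        have hr0A : r₀ ∉ A := by
          rw [← hcond]; simp [hRne.symm, hr0T]
        refine ⟨R, hcond ▸ mem_insert_self _ _, ?_, rfl⟩
        rw [if_neg hr0A, ← hcond, erase_insert hRT]
    · rintro ⟨R', hR'A, hT, rfl⟩
      have hR'Icc := hAsub hR'A
      by_cases hr0A : r₀ ∈ A
      · rw [if_pos hr0A] at hT
        subst hT
        have hsub : A.erase r₀ ⊆ Finset.Icc (r₀ + 1) n := by
          intro x hx
          rw [mem_erase] at hx
          have := hAsub hx.2; rw [mem_Icc] at this ⊢
          omega
        have hins : insert r₀ (A.erase r₀) = A := insert_erase hr0A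
        refine ⟨⟨⟨hsub, ?_⟩, hR'Icc⟩, ?_⟩
        · rw [card_erase_of_mem hr0A, hAcard]; omega
        · rw [if_pos (by rw [hins]; exact hR'A), hins]
      · rw [if_neg hr0A] at hT
        subst hT
        have hsub : A.erase R' ⊆ Finset.Icc (r₀ + 1) n := by
          intro x hx
          rw [mem_erase] at hx
          have hxA := hx.2
          have := hAsub hxA; rw [mem_Icc] at this ⊢
          have : r₀ ≠ x := fun h => hr0A (h ▸ hxA)
          have := hAsub hxA; rw [mem_Icc] at this
          omega
        have hR'r0 : R' ≠ r₀ := fun h => hr0A (h ▸ hR'A)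
        have hnotin : R' ∉ insert r₀ (A.erase R') := by
          simp [hR'r0]
        refine ⟨⟨⟨hsub, ?_⟩, hR'Icc⟩, ?_⟩
        · rw [card_erase_of_mem hR'A, hAcard]; omega
        · rw [if_neg hnotin, insert_erase hR'A]
  have hnum : (((Finset.Icc (r₀ + 1) n).powersetCard k ×ˢ Finset.Icc r₀ n).filter
        (fun TR => (if TR.2 ∈ insert r₀ TR.1 then insert r₀ TR.1
                    else insert TR.2 TR.1) = A)).card = k + 1 := by
    rw [hfilter, Finset.card_image_of_injective _ (fun a b h => (Prod.mk.injEq _ _ _ _ ▸ h).2),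
      hAcard]
  have hden : (((Finset.Icc (r₀ + 1) n).powersetCard k ×ˢ Finset.Icc r₀ n)).card
      = (n - r₀).choose k * (n - r₀ + 1) := by
    rw [Finset.card_product, Finset.card_powersetCard, Nat.card_Icc, Nat.card_Icc]
    congr 2 <;> omega
  rw [hnum, hden]
  have hkle : k ≤ n - r₀ := by omega
  set m := n - r₀ with hm
  have hch : ((m + 1) * m.choose k : ℕ) = (m + 1).choose (k + 1) * (k + 1) :=
    Nat.add_one_mul_choose_eq m k
  have h1 : (0:ℝ) < (m.choose k : ℝ) := by exact_mod_cast Nat.choose_pos hkle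
  have h2 : (0:ℝ) < ((m + 1).choose (k + 1) : ℝ) := by exact_mod_cast Nat.choose_pos hk
  have hd1 : ((m.choose k * (m + 1) : ℕ) : ℝ) ≠ 0 := by
    have := Nat.mul_pos (Nat.choose_pos hkle) (Nat.succ_pos m)
    exact_mod_cast this.ne'
  rw [div_eq_div_iff hd1 h2.ne']
  have hchR : ((m:ℝ) + 1) * (m.choose k : ℝ) = ((m + 1).choose (k + 1) : ℝ) * (k + 1) := by
    exact_mod_cast hch
  push_cast
  nlinarith [hchR]
end
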